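/- Suppose a recursive algorithm satisfies the Push-out condition with time T*: there are constants α > 1 and β ≥ 0 with Σ_{Y ∈ C(X)} T(Y) ≥ α·T(X) − β·(|C(X)|+1)·T* for all iterations X, and every internal node of the recursion tree has at least two children. Then the algorithm satisfies the Pyramid condition with time T* for the potential Φ(X) = T(X)/((α−1)T*) + 3β/(α−1); that is, Σ_{Y ∈ C(X)} Φ(Y) + μ|X'| − Φ(X) ≥ T(X)/T* for every node X (even with μ|X'| omitted, i.e. Σ_{Y ∈ C(X)} Φ(Y) − Φ(X) ≥ T(X)/T*). -/

import Mathlib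

open Finset

/-- The potential `Φ(X) = T(X)/((α−1)T*) + 3β/(α−1)` used to show that the Push-out
condition implies the Pyramid condition. -/
noncomputable def pushPotential {ι : Type*} (T : ι → ℝ) (Tstar a b : ℝ) (X : ι) : ℝ :=
  T X / ((a - 1) * Tstar) + 3 * b / (a - 1)

/-- If an algorithm satisfies Uno's Push-out condition with time `T*` (constants `α > 1`,
`β ≥ 0`, and every internal node has at least two children; leaves directly visit an
element), then it satisfies the Pyramid condition with time `T*` for the potential
`Φ(X) = T(X)/((α−1)T*) + 3β/(α−1)`; moreover at internal nodes the inequality holds even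
with the term `μ|X'|` omitted. -/
theorem stmt_15 {ι : Type*} (children : ι → Finset ι) (T : ι → ℝ) (size' : ι → ℕ)
    (Tstar a b : ℝ) (hT : ∀ X, 0 < T X) (hTs : 0 < Tstar) (ha : 1 < a) (hb : 0 ≤ b)
    (htwo : ∀ X, children X ≠ ∅ → 2 ≤ (children X).card)
    (hleaf : ∀ X, children X = ∅ → 1 ≤ size' X)
    (pushout : ∀ X, (∑ Y ∈ children X, T Y) ≥
      a * T X - b * (((children X).card : ℝ) + 1) * Tstar) :
    ∃ μ : ℝ, 0 < μ ∧
      (∀ X, (∑ Y ∈ children X, pushPotential T Tstar a b Y) + μ * (size' X : ℝ) -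
          pushPotential T Tstar a b X ≥ T X / Tstar) ∧
      (∀ X, children X ≠ ∅ →
        (∑ Y ∈ children X, pushPotential T Tstar a b Y) - pushPotential T Tstar a b X ≥
          T X / Tstar) := by
  have ha' : (0:ℝ) < a - 1 := by linarith
  have ha0 : (a:ℝ) - 1 ≠ 0 := ne_of_gt ha'
  have hTs0 : Tstar ≠ 0 := ne_of_gt hTs
  have key : ∀ X, children X ≠ ∅ →
      (∑ Y ∈ children X, pushPotential T Tstar a b Y) - pushPotential T Tstar a b X ≥
        T X / Tstar := by
    intro X hX
    have hk : 2 ≤ (children X).card := htwo X hX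
    have hk' : (2:ℝ) ≤ ((children X).card : ℝ) := by exact_mod_cast hk
    have hS := pushout X
    have hsum : (∑ Y ∈ children X, pushPotential T Tstar a b Y)
        = (∑ Y ∈ children X, T Y) / ((a-1)*Tstar)
          + ((children X).card : ℝ) * (3*b/(a-1)) := by
      simp [pushPotential, Finset.sum_add_distrib, Finset.sum_div, nsmul_eq_mul]
    rw [hsum]
    unfold pushPotential
    set k : ℝ := ((children X).card : ℝ)
    have hbk : 0 ≤ b * Tstar * (2*k - 4) := mul_nonneg (mul_nonneg hb hTs.le) (by linarith)
    rw [ge_iff_le, ← sub_nonneg]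
    have : (∑ Y ∈ children X, T Y) / ((a - 1) * Tstar) + k * (3 * b / (a - 1)) -
        (T X / ((a - 1) * Tstar) + 3 * b / (a - 1)) - T X / Tstar
        = ((∑ Y ∈ children X, T Y) - (a * T X - b * (k+1) * Tstar)
            + b * Tstar * (2*k - 4)) / ((a-1)*Tstar) := by
      field_simp
      ring
    rw [this]
    apply div_nonneg
    · linarith
    · positivity
  refine ⟨4*b/(a-1) + b + 1, by positivity, ?_, key⟩
  intro X
  by_cases hX : children X = ∅
  · have hs : (1:ℝ) ≤ (size' X : ℝ) := by exact_mod_cast hleaf X hX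
    have hp := pushout X
    rw [hX] at hp
    simp at hp
    -- hp : 0 ≥ a * T X - b * 1 * Tstar  (card ∅ = 0, so b*(0+1)*Tstar)
    have hTb : T X ≤ b * Tstar := by nlinarith [hT X]
    rw [hX]
    simp [pushPotential]
    have h1 : T X / Tstar ≤ b := by rw [div_le_iff₀ hTs]; nlinarith
    have h2 : T X / ((a-1)*Tstar) ≤ b/(a-1) := by
      rw [div_le_div_iff₀ (by positivity) ha']; nlinarith
    have hmu : (4*b/(a-1) + b + 1) * 1 ≤ (4*b/(a-1) + b + 1) * (size' X : ℝ) := by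
      apply mul_le_mul_of_nonneg_left hs; positivity
    have h3 : b/(a-1) + 3*b/(a-1) ≤ 4*b/(a-1) := by
      rw [← add_div]; gcongr <;> linarith
    nlinarith
  · have := key X hX
    have hs : (0:ℝ) ≤ (size' X : ℝ) := Nat.cast_nonneg _
    have : 0 ≤ (4*b/(a-1) + b + 1) * (size' X : ℝ) := by positivity
    linarith [key X hX]
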